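/- For every α > 2 there exists a constant c = c(α) > 0 such that for every rectangle R = [a,b] × [c,d] ⊂ ℝ² (with a ≤ b, c ≤ d) and every real r ≥ 1, ∫_{ℝ²} max{r, dist(u, R)}^{−α} du ≤ c · (Vol(R) + r·Per(R) + r²) · r^{−α}, where dist denotes Euclidean distance from the point u to the set R, Vol(R) = (b−a)(d−c), and Per(R) = 2((b−a) + (d−c)). -/

import Mathlib

open MeasureTheory

noncomputable section

open Metric Set

namespace Lemma64Aux

lemma le_infDist' {X : Type*} [PseudoMetricSpace X] {s : Set X} (hs : s.Nonempty)
    {x : X} {d : ℝ} (h : ∀ y ∈ s, d ≤ dist x y) : d ≤ Metric.infDist x s := by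
  rcases le_or_gt d 0 with hd | hd
  · exact hd.trans Metric.infDist_nonneg
  · rw [Metric.infDist, ← ENNReal.toReal_ofReal hd.le]
    refine ENNReal.toReal_mono (Metric.infEdist_ne_top hs) ?_
    rw [EMetric.le_infEdist]
    intro y hy
    rw [edist_dist]
    exact ENNReal.ofReal_le_ofReal (h y hy)

/-- 1D majorant -/
def Hmaj (β a b r : ℝ) : ℝ → ℝ := fun x =>
  (Set.Icc (a - r) (b + r)).indicator (fun _ => r ^ (-β)) x +
  (Set.Iio (a - r)).indicator (fun y => (a - y) ^ (-β)) x +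
  (Set.Ioi (b + r)).indicator (fun y => (y - b) ^ (-β)) x

variable {β a b r : ℝ}

lemma Hmaj_nonneg (hr : 0 < r) (β a b : ℝ) (x : ℝ) : 0 ≤ Hmaj β a b r x := by
  unfold Hmaj
  refine add_nonneg (add_nonneg ?_ ?_) ?_
  · exact Set.indicator_nonneg (fun y _ => Real.rpow_nonneg hr.le _) x
  · refine Set.indicator_nonneg (fun y hy => Real.rpow_nonneg ?_ _) x
    simp only [Set.mem_Iio] at hy; linarith
  · refine Set.indicator_nonneg (fun y hy => Real.rpow_nonneg ?_ _) x
    simp only [Set.mem_Ioi] at hy; linarith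

lemma infDist_Icc_ge_left (hab : a ≤ b) (x : ℝ) :
    a - x ≤ Metric.infDist x (Set.Icc a b) := by
  refine le_infDist' (Set.nonempty_Icc.2 hab) (fun y hy => ?_)
  rw [Real.dist_eq]
  have : a - x ≤ y - x := by linarith [hy.1]
  exact this.trans (le_trans (le_abs_self _) (by rw [abs_sub_comm]))

lemma infDist_Icc_ge_right (hab : a ≤ b) (x : ℝ) :
    x - b ≤ Metric.infDist x (Set.Icc a b) := by
  refine le_infDist' (Set.nonempty_Icc.2 hab) (fun y hy => ?_)
  rw [Real.dist_eq]
  have : x - b ≤ x - y := by linarith [hy.2]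
  exact this.trans (le_abs_self _)

/-- pointwise bound -/
lemma pointwise_le (hβ : 0 < β) (hab : a ≤ b) (hr : 1 ≤ r) (x : ℝ) :
    (max r (Metric.infDist x (Set.Icc a b))) ^ (-β) ≤ Hmaj β a b r x := by
  have hr0 : (0:ℝ) < r := lt_of_lt_of_le one_pos hr
  have hD0 : 0 ≤ Metric.infDist x (Set.Icc a b) := Metric.infDist_nonneg
  rcases lt_or_ge x (a - r) with hx | hx
  · -- left tail
    have h1 : r < a - x := by linarith
    have h2 : a - x ≤ Metric.infDist x (Set.Icc a b) := infDist_Icc_ge_left hab x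
    have hHx : Hmaj β a b r x = (a - x) ^ (-β) := by
      unfold Hmaj
      rw [Set.indicator_of_notMem (by simp [Set.mem_Icc]; intro h; linarith),
        Set.indicator_of_mem (Set.mem_Iio.2 hx),
        Set.indicator_of_notMem (by simp [Set.mem_Ioi]; linarith)]
      ring
    rw [hHx]
    apply Real.rpow_le_rpow_of_nonpos (by linarith) (le_max_of_le_right h2) (by linarith)
  rcases le_or_gt x (b + r) with hx2 | hx2
  · -- middle
    have hHx : Hmaj β a b r x = r ^ (-β) := by
      unfold Hmaj
      rw [Set.indicator_of_mem (Set.mem_Icc.2 ⟨hx, hx2⟩),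
        Set.indicator_of_notMem (by simp [Set.mem_Iio]; linarith),
        Set.indicator_of_notMem (by simp [Set.mem_Ioi]; linarith)]
      ring
    rw [hHx]
    exact Real.rpow_le_rpow_of_nonpos hr0 (le_max_left _ _) (by linarith)
  · -- right tail
    have h2 : x - b ≤ Metric.infDist x (Set.Icc a b) := infDist_Icc_ge_right hab x
    have hHx : Hmaj β a b r x = (x - b) ^ (-β) := by
      unfold Hmaj
      rw [Set.indicator_of_notMem (by simp [Set.mem_Icc]; intro h; linarith),
        Set.indicator_of_notMem (by simp [Set.mem_Iio]; linarith),
        Set.indicator_of_mem (Set.mem_Ioi.2 hx2)]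
      ring
    rw [hHx]
    apply Real.rpow_le_rpow_of_nonpos (by linarith) (le_max_of_le_right h2) (by linarith)

lemma subLeft_preimage (a r : ℝ) : (fun x : ℝ => a - x) ⁻¹' (Set.Iio (a - r)) = Set.Ioi r := by
  ext x; simp [sub_lt_sub_iff_left]

lemma addRight_preimage (b r : ℝ) : (fun x : ℝ => x + b) ⁻¹' (Set.Ioi (b + r)) = Set.Ioi r := by
  ext x
  simp only [Set.mem_preimage, Set.mem_Ioi]
  constructor <;> intro h <;> linarith

lemma mp_sub_left (a : ℝ) : MeasurePreserving (fun t : ℝ => a - t) volume volume := by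
  have h1 := measurePreserving_add_left (volume : Measure ℝ) a
  have h2 := Measure.measurePreserving_neg (volume : Measure ℝ)
  simpa [sub_eq_add_neg, Function.comp_def] using h1.comp h2

lemma integrableOn_left_tail (hβ : 1 < β) (hr : 0 < r) (a : ℝ) :
    IntegrableOn (fun y : ℝ => (a - y) ^ (-β)) (Set.Iio (a - r)) := by
  have hmp : MeasurePreserving (fun x : ℝ => a - x) volume volume := mp_sub_left a
  have hemb : MeasurableEmbedding (fun x : ℝ => a - x) :=
    (MeasurableEquiv.subLeft a).measurableEmbedding
  rw [← hmp.integrableOn_comp_preimage hemb, subLeft_preimage]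
  have : ((fun y : ℝ => (a - y) ^ (-β)) ∘ (fun x : ℝ => a - x)) = fun x : ℝ => x ^ (-β) := by
    funext x; simp
  rw [this]
  exact integrableOn_Ioi_rpow_of_lt (by linarith) hr

lemma integral_left_tail (hβ : 1 < β) (hr : 0 < r) (a : ℝ) :
    ∫ y in Set.Iio (a - r), (a - y) ^ (-β) = r ^ (1 - β) / (β - 1) := by
  have hmp : MeasurePreserving (fun x : ℝ => a - x) volume volume := mp_sub_left a
  have hemb : MeasurableEmbedding (fun x : ℝ => a - x) :=
    (MeasurableEquiv.subLeft a).measurableEmbedding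
  have := hmp.setIntegral_preimage_emb hemb (fun y : ℝ => (a - y) ^ (-β)) (Set.Iio (a - r))
  rw [subLeft_preimage] at this
  rw [← this]
  have heq : ∀ x ∈ Set.Ioi r, (a - (a - x)) ^ (-β) = x ^ (-β) := by
    intro x _; ring_nf
  rw [setIntegral_congr_fun measurableSet_Ioi heq, integral_Ioi_rpow_of_lt (by linarith) hr]
  rw [show -β + 1 = 1 - β by ring]
  rw [div_eq_div_iff (by linarith) (by linarith)]
  ring

lemma integrableOn_right_tail (hβ : 1 < β) (hr : 0 < r) (b : ℝ) :
    IntegrableOn (fun y : ℝ => (y - b) ^ (-β)) (Set.Ioi (b + r)) := by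
  have hmp : MeasurePreserving (fun x : ℝ => x + b) volume volume :=
    measurePreserving_add_right volume b
  have hemb : MeasurableEmbedding (fun x : ℝ => x + b) :=
    (MeasurableEquiv.addRight b).measurableEmbedding
  rw [← hmp.integrableOn_comp_preimage hemb, addRight_preimage]
  have : ((fun y : ℝ => (y - b) ^ (-β)) ∘ (fun x : ℝ => x + b)) = fun x : ℝ => x ^ (-β) := by
    funext x; simp
  rw [this]
  exact integrableOn_Ioi_rpow_of_lt (by linarith) hr

lemma integral_right_tail (hβ : 1 < β) (hr : 0 < r) (b : ℝ) :
    ∫ y in Set.Ioi (b + r), (y - b) ^ (-β) = r ^ (1 - β) / (β - 1) := by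
  have hmp : MeasurePreserving (fun x : ℝ => x + b) volume volume :=
    measurePreserving_add_right volume b
  have hemb : MeasurableEmbedding (fun x : ℝ => x + b) :=
    (MeasurableEquiv.addRight b).measurableEmbedding
  have := hmp.setIntegral_preimage_emb hemb (fun y : ℝ => (y - b) ^ (-β)) (Set.Ioi (b + r))
  rw [addRight_preimage] at this
  rw [← this]
  have heq : ∀ x ∈ Set.Ioi r, (x + b - b) ^ (-β) = x ^ (-β) := by
    intro x _; ring_nf
  rw [setIntegral_congr_fun measurableSet_Ioi heq, integral_Ioi_rpow_of_lt (by linarith) hr]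
  rw [show -β + 1 = 1 - β by ring]
  rw [div_eq_div_iff (by linarith) (by linarith)]
  ring

lemma integrable_Hmaj (hβ : 1 < β) (hab : a ≤ b) (hr : 0 < r) :
    Integrable (Hmaj β a b r) := by
  unfold Hmaj
  refine Integrable.add (Integrable.add ?_ ?_) ?_
  · rw [integrable_indicator_iff measurableSet_Icc]
    exact integrableOn_const measure_Icc_lt_top.ne
  · rw [integrable_indicator_iff measurableSet_Iio]
    exact integrableOn_left_tail hβ hr a
  · rw [integrable_indicator_iff measurableSet_Ioi]
    exact integrableOn_right_tail hβ hr b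

lemma integral_Hmaj_le (hβ : 1 < β) (hab : a ≤ b) (hr : 0 < r) :
    ∫ x, Hmaj β a b r x ≤ (b - a + (2 + 2 / (β - 1)) * r) * r ^ (-β) := by
  have hi1 : Integrable (fun x : ℝ => (Set.Icc (a - r) (b + r)).indicator (fun _ => r ^ (-β)) x) := by
    rw [integrable_indicator_iff measurableSet_Icc]
    exact integrableOn_const measure_Icc_lt_top.ne
  have hi2 : Integrable (fun x : ℝ => (Set.Iio (a - r)).indicator (fun y => (a - y) ^ (-β)) x) := by
    rw [integrable_indicator_iff measurableSet_Iio]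
    exact integrableOn_left_tail hβ hr a
  have hi3 : Integrable (fun x : ℝ => (Set.Ioi (b + r)).indicator (fun y => (y - b) ^ (-β)) x) := by
    rw [integrable_indicator_iff measurableSet_Ioi]
    exact integrableOn_right_tail hβ hr b
  have hi12 : Integrable (fun x : ℝ => (Set.Icc (a - r) (b + r)).indicator (fun _ => r ^ (-β)) x +
      (Set.Iio (a - r)).indicator (fun y => (a - y) ^ (-β)) x) := hi1.add hi2
  unfold Hmaj
  rw [integral_add hi12 hi3, integral_add hi1 hi2]
  rw [integral_indicator measurableSet_Icc, integral_indicator measurableSet_Iio,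
    integral_indicator measurableSet_Ioi, setIntegral_const,
    integral_left_tail hβ hr a, integral_right_tail hβ hr b]
  rw [Real.volume_real_Icc_of_le (by linarith)]
  have h1 : r ^ (1 - β) = r * r ^ (-β) := by
    rw [show (1 - β) = 1 + (-β) by ring, Real.rpow_add hr, Real.rpow_one]
  rw [h1, smul_eq_mul]
  have h2 : (0:ℝ) < β - 1 := by linarith
  have h3 : (0:ℝ) ≤ r ^ (-β) := Real.rpow_nonneg hr.le _
  rw [div_eq_mul_inv]
  have : b + r - (a - r) = b - a + 2 * r := by ring
  rw [this]
  ring_nf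
  nlinarith [mul_pos hr h2]

end Lemma64Aux

namespace Lemma64Aux
lemma coord_dist_le (u v : EuclideanSpace ℝ (Fin 2)) (i : Fin 2) :
    dist (u i) (v i) ≤ dist u v := by
  rw [EuclideanSpace.dist_eq]
  have h0 : dist (u i) (v i) = Real.sqrt (dist (u i) (v i) ^ 2) :=
    (Real.sqrt_sq dist_nonneg).symm
  rw [h0]
  apply Real.sqrt_le_sqrt
  exact Finset.single_le_sum (f := fun j => dist (u j) (v j) ^ 2)
    (fun j _ => sq_nonneg _) (Finset.mem_univ i)

end Lemma64Aux


open Lemma64Aux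

/-- The key analytic estimate of Lemma 6.4: for `α > 2`, the integral over the plane of
`max(r, dist(u, R))^(-α)` is at most `c (Vol(R) + r Per(R) + r²) r^(-α)` for any
rectangle `R` and any `r ≥ 1`. -/
theorem integral_max_dist_rect_bound (α : ℝ) (hα : 2 < α) :
    ∃ c : ℝ, 0 < c ∧
      ∀ a b c' d : ℝ, a ≤ b → c' ≤ d → ∀ r : ℝ, 1 ≤ r →
        (∫ u : EuclideanSpace ℝ (Fin 2),
            (max r (Metric.infDist u
              {v : EuclideanSpace ℝ (Fin 2) |
                v 0 ∈ Set.Icc a b ∧ v 1 ∈ Set.Icc c' d})) ^ (-α)) ≤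
          c * ((b - a) * (d - c') + r * (2 * ((b - a) + (d - c'))) + r ^ 2) *
            r ^ (-α) := by

  set β : ℝ := α / 2 with hβdef
  have hβ : 1 < β := by rw [hβdef]; linarith
  have hβ0 : 0 < β := by linarith
  set C : ℝ := 2 + 2 / (β - 1) with hCdef
  have hC2 : 2 ≤ C := by
    rw [hCdef]
    have : 0 < 2 / (β - 1) := div_pos two_pos (by linarith)
    linarith
  have hC0 : 0 < C := by linarith
  refine ⟨C ^ 2, by positivity, ?_⟩
  intro a b c' d hab hcd r hr
  have hr0 : (0:ℝ) < r := by linarith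
  set R : Set (EuclideanSpace ℝ (Fin 2)) :=
    {v | v 0 ∈ Set.Icc a b ∧ v 1 ∈ Set.Icc c' d} with hR
  have hRne : R.Nonempty := by
    refine ⟨WithLp.toLp 2 (fun i => if i = 0 then a else c' : Fin 2 → ℝ), ?_, ?_⟩
    · simp [Set.mem_Icc, hab]
    · simp [Set.mem_Icc, hcd]
  have hs0 : ∀ u : EuclideanSpace ℝ (Fin 2),
      Metric.infDist (u 0) (Set.Icc a b) ≤ Metric.infDist u R := fun u =>
    le_infDist' hRne (fun v hv =>
      le_trans (Metric.infDist_le_dist_of_mem hv.1) (coord_dist_le u v 0))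
  have hs1 : ∀ u : EuclideanSpace ℝ (Fin 2),
      Metric.infDist (u 1) (Set.Icc c' d) ≤ Metric.infDist u R := fun u =>
    le_infDist' hRne (fun v hv =>
      le_trans (Metric.infDist_le_dist_of_mem hv.2) (coord_dist_le u v 1))
  have hpt : ∀ u : EuclideanSpace ℝ (Fin 2),
      (max r (Metric.infDist u R)) ^ (-α) ≤ Hmaj β a b r (u 0) * Hmaj β c' d r (u 1) := by
    intro u
    set M := max r (Metric.infDist u R) with hM
    have hM0 : 0 < M := lt_of_lt_of_le hr0 (le_max_left _ _)
    have hkey : M ^ (-α) = M ^ (-β) * M ^ (-β) := by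
      rw [← Real.rpow_add hM0]
      congr 1
      rw [hβdef]; ring
    have h1 : M ^ (-β) ≤ (max r (Metric.infDist (u 0) (Set.Icc a b))) ^ (-β) :=
      Real.rpow_le_rpow_of_nonpos (lt_of_lt_of_le hr0 (le_max_left _ _))
        (max_le_max le_rfl (hs0 u)) (by linarith)
    have h2 : M ^ (-β) ≤ (max r (Metric.infDist (u 1) (Set.Icc c' d))) ^ (-β) :=
      Real.rpow_le_rpow_of_nonpos (lt_of_lt_of_le hr0 (le_max_left _ _))
        (max_le_max le_rfl (hs1 u)) (by linarith)
    calc M ^ (-α) = M ^ (-β) * M ^ (-β) := hkey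
      _ ≤ (max r (Metric.infDist (u 0) (Set.Icc a b))) ^ (-β) *
            (max r (Metric.infDist (u 1) (Set.Icc c' d))) ^ (-β) := by
          apply mul_le_mul h1 h2 (Real.rpow_nonneg hM0.le _)
            (Real.rpow_nonneg (le_trans hr0.le (le_max_left _ _)) _)
      _ ≤ Hmaj β a b r (u 0) * Hmaj β c' d r (u 1) := by
          apply mul_le_mul (pointwise_le hβ0 hab hr _) (pointwise_le hβ0 hcd hr _)
            (Real.rpow_nonneg (le_trans hr0.le (le_max_left _ _)) _)
            (Hmaj_nonneg hr0 _ _ _ _)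
  set ψ : EuclideanSpace ℝ (Fin 2) ≃ᵐ ℝ × ℝ :=
    (MeasurableEquiv.toLp 2 (Fin 2 → ℝ)).symm.trans
      (MeasurableEquiv.piFinTwo (fun _ : Fin 2 => ℝ)) with hψdef
  have hψ : MeasurePreserving ψ volume volume :=
    (volume_preserving_piFinTwo (fun _ : Fin 2 => ℝ)).comp
      (EuclideanSpace.volume_preserving_symm_measurableEquiv_toLp (Fin 2))
  have hG : Integrable (fun z : ℝ × ℝ => Hmaj β a b r z.1 * Hmaj β c' d r z.2) := by
    rw [Measure.volume_eq_prod]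
    exact (integrable_Hmaj hβ hab hr0).mul_prod (integrable_Hmaj hβ hcd hr0)
  have hg : Integrable
      (fun u : EuclideanSpace ℝ (Fin 2) => Hmaj β a b r (u 0) * Hmaj β c' d r (u 1)) :=
    (hψ.integrable_comp_emb ψ.measurableEmbedding).2 hG
  have hrpow : r ^ (-β) * r ^ (-β) = r ^ (-α) := by
    rw [← Real.rpow_add hr0]
    congr 1
    rw [hβdef]; ring
  calc (∫ u : EuclideanSpace ℝ (Fin 2), (max r (Metric.infDist u R)) ^ (-α))
      ≤ ∫ u : EuclideanSpace ℝ (Fin 2), Hmaj β a b r (u 0) * Hmaj β c' d r (u 1) :=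
        integral_mono_of_nonneg
          (Filter.Eventually.of_forall fun u =>
            Real.rpow_nonneg (le_trans hr0.le (le_max_left _ _)) _)
          hg (Filter.Eventually.of_forall hpt)
    _ = ∫ z : ℝ × ℝ, Hmaj β a b r z.1 * Hmaj β c' d r z.2 :=
        hψ.integral_comp ψ.measurableEmbedding
          (fun z : ℝ × ℝ => Hmaj β a b r z.1 * Hmaj β c' d r z.2)
    _ = (∫ x, Hmaj β a b r x) * (∫ y, Hmaj β c' d r y) := by
        rw [Measure.volume_eq_prod, integral_prod_mul]
    _ ≤ ((b - a + C * r) * r ^ (-β)) * ((d - c' + C * r) * r ^ (-β)) := by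
        apply mul_le_mul (integral_Hmaj_le hβ hab hr0) (integral_Hmaj_le hβ hcd hr0)
          (integral_nonneg (Hmaj_nonneg hr0 _ _ _))
        have h0 : (0:ℝ) ≤ b - a := by linarith
        positivity
    _ = ((b - a + C * r) * (d - c' + C * r)) * r ^ (-α) := by
        rw [← hrpow]; ring
    _ ≤ C ^ 2 * ((b - a) * (d - c') + r * (2 * ((b - a) + (d - c'))) + r ^ 2) *
          r ^ (-α) := by
        apply mul_le_mul_of_nonneg_right _ (Real.rpow_nonneg hr0.le _)
        have hA : (0:ℝ) ≤ b - a := by linarith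
        have hB : (0:ℝ) ≤ d - c' := by linarith
        have e1 : 0 ≤ (C ^ 2 - 1) * ((b - a) * (d - c')) :=
          mul_nonneg (by nlinarith) (mul_nonneg hA hB)
        have e2 : 0 ≤ (2 * C ^ 2 - C) * (r * (b - a)) :=
          mul_nonneg (by nlinarith) (mul_nonneg hr0.le hA)
        have e3 : 0 ≤ (2 * C ^ 2 - C) * (r * (d - c')) :=
          mul_nonneg (by nlinarith) (mul_nonneg hr0.le hB)
        nlinarith [e1, e2, e3]
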